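/- Lemma 1, weighted tropical form: let A be a weighted automaton over the tropical semiring given by a finite state set σ, a finite set E of transitions (j, b, w, j') with j, j' ∈ σ, b ∈ Σ, w ∈ ℝ₊, an initial-weight function λ : σ → [0, ∞], and a final-weight function ρ : σ → [0, ∞]; for y ∈ Σ*, A(y) is the infimum over all paths π in A labeled y from a state p to a state q of λ(p) + w[π] + ρ(q), where w[π] is the sum of the transition weights of π. Let x = x₁⋯xₙ ∈ Σ*, and define the product graph U with vertex set {0, …, n} × σ and weighted edges: from (i, j) to (i+1, j) of weight c(x_{i+1}, ε) for each i < n and j ∈ σ; from (i, j) to (i, j') of weight c(ε, b) + w for each transition (j, b, w, j') ∈ E; and from (i, j) to (i+1, j') of weight c(x_{i+1}, b) + w for each i < n and each transition (j, b, w, j') ∈ E. Then the infimum, over all directed walks in U from some (0, j₀) to some (n, j_f), of λ(j₀) plus the sum of edge weights along the walk plus ρ(j_f), equals d(x, A) = inf_{y ∈ Σ*} (A(y) + d(x, y)) (both sides taken in [0, ∞]). -/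

import Mathlib

open scoped ENNReal NNReal

/-- An edit operation over alphabet `α`: a pair in `(Σ ∪ {ε}) × (Σ ∪ {ε})`,
where `none` plays the role of `ε`.  The pair `(none, none)` is excluded
from `Ω` via the validity condition in `IsAlignment`. -/
abbrev EditOp (α : Type*) := Option α × Option α

/-- `ω` is an alignment between `x` and `y`: every letter of `ω` lies in
`Ω = (Σ ∪ {ε}) × (Σ ∪ {ε}) − {(ε,ε)}`, and the natural morphism `h`
(erasing `ε`'s componentwise) sends `ω` to `(x, y)`. -/
def IsAlignment {α : Type*} (ω : List (EditOp α)) (x y : List α) : Prop :=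
  (∀ p ∈ ω, p ≠ (none, none)) ∧
    ω.filterMap Prod.fst = x ∧ ω.filterMap Prod.snd = y

/-- The cost `c(ω) = Σᵢ c(ωᵢ)` of an alignment. -/
def alignCost {α : Type*} (c : EditOp α → ℝ≥0) (ω : List (EditOp α)) : ℝ≥0 :=
  (ω.map c).sum

/-- The edit-distance `d(x, y)`: the minimal cost of an alignment between
`x` and `y`. -/
noncomputable def editDist {α : Type*} (c : EditOp α → ℝ≥0) (x y : List α) : ℝ≥0 :=
  sInf {r : ℝ≥0 | ∃ ω : List (EditOp α), IsAlignment ω x y ∧ alignCost c ω = r}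

/-- The weight of the walk `u, v₀, v₁, …` : the sum of the weights of its
consecutive edges (an empty walk has weight `0`). -/
noncomputable def walkWeight {V : Type*} (w : V → V → ℝ≥0∞) : V → List V → ℝ≥0∞
  | _, [] => 0
  | u, v :: vs => w u v + walkWeight w v vs

/-- A weighted automaton over the tropical semiring: a set `E` of transitions
`(j, b, w, j')`, an initial-weight function `λ` and a final-weight function
`ρ` (taking values in `[0, ∞]`). -/
structure WFA (α σ : Type*) where
  /-- The set of transitions `(source, label, weight, destination)`. -/
  trans : Set (σ × α × ℝ≥0 × σ)
  /-- The initial weight function `λ`. -/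
  initW : σ → ℝ≥0∞
  /-- The final weight function `ρ`. -/
  finalW : σ → ℝ≥0∞

/-- `IsPath E p es q`: the list of transitions `es` forms a path of the
automaton from state `p` to state `q`. -/
def IsPath {α σ : Type*} (E : Set (σ × α × ℝ≥0 × σ)) :
    σ → List (σ × α × ℝ≥0 × σ) → σ → Prop
  | p, [], q => p = q
  | p, e :: es, q => e ∈ E ∧ e.1 = p ∧ IsPath E e.2.2.2 es q

/-- The label of a path: the concatenation of its transition labels. -/
def pathLabel {α σ : Type*} (es : List (σ × α × ℝ≥0 × σ)) : List α :=
  es.map (fun e => e.2.1)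

/-- The weight `w[π]` of a path: the sum of its transition weights. -/
noncomputable def pathWeight {α σ : Type*} (es : List (σ × α × ℝ≥0 × σ)) : ℝ≥0∞ :=
  (es.map (fun e => (e.2.2.1 : ℝ≥0∞))).sum

/-- The weight `A(y)` associated by the weighted automaton `A` to a string
`y`: the infimum over all paths `π` labeled `y` from a state `p` to a state
`q` of `λ(p) + w[π] + ρ(q)`. -/
noncomputable def WFA.val {α σ : Type*} (A : WFA α σ) (y : List α) : ℝ≥0∞ :=
  ⨅ (p : σ) (q : σ) (es : List (σ × α × ℝ≥0 × σ))
    (_ : IsPath A.trans p es q ∧ pathLabel es = y),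
    A.initW p + pathWeight es + A.finalW q

/-- Edge weights of the product graph `U` of the string `x` and the weighted
automaton `A`: from `(i, j)` to `(i+1, j)` a deletion edge of weight
`c(x_{i+1}, ε)`; from `(i, j)` to `(i, j')` an insertion edge of weight
`c(ε, b) + w` for each transition `(j, b, w, j') ∈ E`; and from `(i, j)` to
`(i+1, j')` a substitution/match edge of weight `c(x_{i+1}, b) + w` for each
such transition.  Parallel edges are merged by taking the infimum of their
weights; absence of any edge gives weight `∞`. -/
noncomputable def wfaEdgeWeight {α σ : Type*} (A : WFA α σ)
    (c : EditOp α → ℝ≥0) (x : List α) (p q : ℕ × σ) : ℝ≥0∞ :=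
  sInf
    ({t | ∃ hi : p.1 < x.length, q.1 = p.1 + 1 ∧ q.2 = p.2 ∧
        t = (c (some (x.get ⟨p.1, hi⟩), none) : ℝ≥0∞)} ∪
     {t | ∃ e ∈ A.trans, e.1 = p.2 ∧ q.1 = p.1 ∧ q.2 = e.2.2.2 ∧
        t = (c (none, some e.2.1) : ℝ≥0∞) + (e.2.2.1 : ℝ≥0∞)} ∪
     {t | ∃ e ∈ A.trans, ∃ hi : p.1 < x.length, e.1 = p.2 ∧ q.1 = p.1 + 1 ∧
        q.2 = e.2.2.2 ∧
        t = (c (some (x.get ⟨p.1, hi⟩), some e.2.1) : ℝ≥0∞) + (e.2.2.1 : ℝ≥0∞)})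


section Aux
variable {α σ : Type*}

open scoped ENNReal NNReal

lemma alignCost_cons (c : EditOp α → ℝ≥0) (p : EditOp α) (ω : List (EditOp α)) :
    alignCost c (p :: ω) = c p + alignCost c ω := by simp [alignCost]

lemma pathWeight_cons (e : σ × α × ℝ≥0 × σ) (es : List (σ × α × ℝ≥0 × σ)) :
    pathWeight (e :: es) = (e.2.2.1 : ℝ≥0∞) + pathWeight es := by simp [pathWeight]

lemma exists_alignment (x y : List α) :
    IsAlignment ((x.map fun a => ((some a : Option α), (none : Option α))) ++
      (y.map fun b => ((none : Option α), (some b : Option α)))) x y := by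
  refine ⟨fun p hp => ?_, ?_, ?_⟩
  · rcases List.mem_append.1 hp with h | h <;> simp only [List.mem_map] at h <;>
      obtain ⟨a, _, rfl⟩ := h <;> simp
  · simp [List.filterMap_append, List.filterMap_map, Function.comp_def]
  · simp [List.filterMap_append, List.filterMap_map, Function.comp_def]

lemma editDist_coe (c : EditOp α → ℝ≥0) (x y : List α) :
    (editDist c x y : ℝ≥0∞) =
      ⨅ (ω : List (EditOp α)) (_ : IsAlignment ω x y), (alignCost c ω : ℝ≥0∞) := by
  have hne : {r : ℝ≥0 | ∃ ω : List (EditOp α), IsAlignment ω x y ∧ alignCost c ω = r}.Nonempty :=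
    ⟨_, _, exists_alignment x y, rfl⟩
  rw [editDist, ENNReal.coe_sInf hne]
  apply le_antisymm
  · refine le_iInf fun ω => le_iInf fun hω => ?_
    exact iInf₂_le (alignCost c ω) ⟨ω, hω, rfl⟩
  · refine le_iInf₂ fun r hr => ?_
    obtain ⟨ω, hω, rfl⟩ := hr
    exact iInf₂_le ω hω

lemma editDist_le (c : EditOp α → ℝ≥0) {x y : List α} {ω : List (EditOp α)}
    (hω : IsAlignment ω x y) : editDist c x y ≤ alignCost c ω :=
  csInf_le (OrderBot.bddBelow _) ⟨ω, hω, rfl⟩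

end Aux

section LemA
variable {α σ : Type*}
open scoped ENNReal NNReal

lemma walk_of_align (A : WFA α σ) (c : EditOp α → ℝ≥0) (x : List α) :
    ∀ (ω : List (EditOp α)) (i : ℕ) (j : σ) (es : List (σ × α × ℝ≥0 × σ)) (q : σ),
      (∀ p ∈ ω, p ≠ (none, none)) →
      x.drop i = ω.filterMap Prod.fst →
      i ≤ x.length →
      IsPath A.trans j es q →
      pathLabel es = ω.filterMap Prod.snd →
      ∃ vs : List (ℕ × σ),
        (((i, j) :: vs).getLast (List.cons_ne_nil _ _)).1 = x.length ∧
        (((i, j) :: vs).getLast (List.cons_ne_nil _ _)).2 = q ∧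
        walkWeight (wfaEdgeWeight A c x) (i, j) vs ≤
          (alignCost c ω : ℝ≥0∞) + pathWeight es := by
  intro ω
  induction ω with
  | nil =>
    intro i j es q _ hx hi hp hl
    have hes : es = [] := by simpa [pathLabel, List.map_eq_nil_iff] using hl
    subst hes
    have hq : j = q := hp
    subst hq
    have hix : i = x.length := le_antisymm hi (List.drop_eq_nil_iff.1 (by simpa using hx))
    refine ⟨[], by simp [hix], by simp, by simp [walkWeight]⟩
  | cons p ω ih =>
    intro i j es q hval hx hi hp hl
    obtain ⟨oa, ob⟩ := p
    match oa, ob with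
    | none, none => exact absurd rfl (hval _ List.mem_cons_self)
    | some a, none =>
      simp only [List.filterMap_cons] at hx hl
      have hilt : i < x.length := by
        by_contra h
        rw [List.drop_eq_nil_of_le (le_of_not_gt h)] at hx
        exact List.cons_ne_nil _ _ hx.symm
      have hdrop := List.drop_eq_getElem_cons hilt
      rw [hdrop] at hx
      have ha : x[i] = a := (List.cons.injEq _ _ _ _ ▸ hx).1
      have hx' : x.drop (i+1) = ω.filterMap Prod.fst := (List.cons.injEq _ _ _ _ ▸ hx).2
      obtain ⟨vs', h1, h2, h3⟩ := ih (i+1) j es q (fun p hp => hval p (List.mem_cons_of_mem _ hp)) hx' hilt hp hl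
      refine ⟨(i+1, j) :: vs', ?_, ?_, ?_⟩
      · rwa [List.getLast_cons (List.cons_ne_nil _ _)]
      · rwa [List.getLast_cons (List.cons_ne_nil _ _)]
      · have hedge : wfaEdgeWeight A c x (i, j) (i+1, j) ≤ (c (some a, none) : ℝ≥0∞) := by
          apply sInf_le
          left; left
          exact ⟨hilt, rfl, rfl, by simp [List.get_eq_getElem, ha]⟩
        rw [walkWeight, alignCost_cons]
        push_cast
        calc wfaEdgeWeight A c x (i, j) (i+1, j) + walkWeight (wfaEdgeWeight A c x) (i+1, j) vs'
            ≤ (c (some a, none) : ℝ≥0∞) + ((alignCost c ω : ℝ≥0∞) + pathWeight es) :=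
              add_le_add hedge h3
          _ = (c (some a, none) : ℝ≥0∞) + (alignCost c ω : ℝ≥0∞) + pathWeight es := by
              rw [add_assoc]
    | none, some b =>
      simp only [List.filterMap_cons] at hx hl
      match es with
      | [] => exact absurd hl (by simp [pathLabel])
      | e :: es' =>
        simp only [pathLabel, List.map_cons, List.cons.injEq] at hl
        obtain ⟨hb, hl'⟩ := hl
        obtain ⟨he, he1, hp'⟩ := hp
        obtain ⟨vs', h1, h2, h3⟩ := ih i e.2.2.2 es' q (fun p hp => hval p (List.mem_cons_of_mem _ hp)) hx hi hp' hl'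
        refine ⟨(i, e.2.2.2) :: vs', ?_, ?_, ?_⟩
        · rwa [List.getLast_cons (List.cons_ne_nil _ _)]
        · rwa [List.getLast_cons (List.cons_ne_nil _ _)]
        · have hedge : wfaEdgeWeight A c x (i, j) (i, e.2.2.2) ≤
              (c (none, some b) : ℝ≥0∞) + (e.2.2.1 : ℝ≥0∞) := by
            apply sInf_le
            left; right
            exact ⟨e, he, he1, rfl, rfl, by rw [hb]⟩
          rw [walkWeight, alignCost_cons, pathWeight_cons]
          push_cast
          calc wfaEdgeWeight A c x (i, j) (i, e.2.2.2) + walkWeight (wfaEdgeWeight A c x) (i, e.2.2.2) vs'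
              ≤ ((c (none, some b) : ℝ≥0∞) + (e.2.2.1 : ℝ≥0∞)) +
                  ((alignCost c ω : ℝ≥0∞) + pathWeight es') := add_le_add hedge h3
            _ = (c (none, some b) : ℝ≥0∞) + (alignCost c ω : ℝ≥0∞) +
                  ((e.2.2.1 : ℝ≥0∞) + pathWeight es') := by
                rw [add_add_add_comm]
    | some a, some b =>
      simp only [List.filterMap_cons] at hx hl
      have hilt : i < x.length := by
        by_contra h
        rw [List.drop_eq_nil_of_le (le_of_not_gt h)] at hx
        exact List.cons_ne_nil _ _ hx.symm
      have hdrop := List.drop_eq_getElem_cons hilt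
      rw [hdrop] at hx
      have ha : x[i] = a := (List.cons.injEq _ _ _ _ ▸ hx).1
      have hx' : x.drop (i+1) = ω.filterMap Prod.fst := (List.cons.injEq _ _ _ _ ▸ hx).2
      match es with
      | [] => exact absurd hl (by simp [pathLabel])
      | e :: es' =>
        simp only [pathLabel, List.map_cons, List.cons.injEq] at hl
        obtain ⟨hb, hl'⟩ := hl
        obtain ⟨he, he1, hp'⟩ := hp
        obtain ⟨vs', h1, h2, h3⟩ := ih (i+1) e.2.2.2 es' q (fun p hp => hval p (List.mem_cons_of_mem _ hp)) hx' hilt hp' hl'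
        refine ⟨(i+1, e.2.2.2) :: vs', ?_, ?_, ?_⟩
        · rwa [List.getLast_cons (List.cons_ne_nil _ _)]
        · rwa [List.getLast_cons (List.cons_ne_nil _ _)]
        · have hedge : wfaEdgeWeight A c x (i, j) (i+1, e.2.2.2) ≤
              (c (some a, some b) : ℝ≥0∞) + (e.2.2.1 : ℝ≥0∞) := by
            apply sInf_le
            right
            exact ⟨e, he, hilt, he1, rfl, rfl, by simp [List.get_eq_getElem, ha, hb]⟩
          rw [walkWeight, alignCost_cons, pathWeight_cons]
          push_cast
          calc wfaEdgeWeight A c x (i, j) (i+1, e.2.2.2) + walkWeight (wfaEdgeWeight A c x) (i+1, e.2.2.2) vs'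
              ≤ ((c (some a, some b) : ℝ≥0∞) + (e.2.2.1 : ℝ≥0∞)) +
                  ((alignCost c ω : ℝ≥0∞) + pathWeight es') := add_le_add hedge h3
            _ = (c (some a, some b) : ℝ≥0∞) + (alignCost c ω : ℝ≥0∞) +
                  ((e.2.2.1 : ℝ≥0∞) + pathWeight es') := by
                rw [add_add_add_comm]
end LemA

section LemB
variable {α σ : Type*}
open scoped ENNReal NNReal

lemma align_of_walk (A : WFA α σ) (hE : A.trans.Finite) (c : EditOp α → ℝ≥0) (x : List α) :
    ∀ (vs : List (ℕ × σ)) (i : ℕ) (j : σ),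
      (((i, j) :: vs).getLast (List.cons_ne_nil _ _)).1 = x.length →
      walkWeight (wfaEdgeWeight A c x) (i, j) vs = ⊤ ∨
      ∃ (y : List α) (ω : List (EditOp α)) (es : List (σ × α × ℝ≥0 × σ)) (q : σ),
        IsAlignment ω (x.drop i) y ∧ IsPath A.trans j es q ∧ pathLabel es = y ∧
        (((i, j) :: vs).getLast (List.cons_ne_nil _ _)).2 = q ∧
        (alignCost c ω : ℝ≥0∞) + pathWeight es ≤
          walkWeight (wfaEdgeWeight A c x) (i, j) vs := by
  intro vs
  induction vs with
  | nil =>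
    intro i j hlast
    right
    have hix : i = x.length := hlast
    exact ⟨[], [], [], j, ⟨by simp, by simp [hix], by simp⟩, rfl, rfl, rfl,
      by simp [walkWeight, alignCost, pathWeight]⟩
  | cons v vs' ih =>
    intro i j hlast
    obtain ⟨i', j'⟩ := v
    rw [walkWeight]
    by_cases htop : wfaEdgeWeight A c x (i, j) (i', j') = ⊤
    · left; simp [htop]
    · set S := ({t | ∃ hi : (i, j).1 < x.length, (i', j').1 = (i, j).1 + 1 ∧ (i', j').2 = (i, j).2 ∧
            t = (c (some (x.get ⟨(i, j).1, hi⟩), none) : ℝ≥0∞)} ∪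
         {t | ∃ e ∈ A.trans, e.1 = (i, j).2 ∧ (i', j').1 = (i, j).1 ∧ (i', j').2 = e.2.2.2 ∧
            t = (c (none, some e.2.1) : ℝ≥0∞) + (e.2.2.1 : ℝ≥0∞)} ∪
         {t | ∃ e ∈ A.trans, ∃ hi : (i, j).1 < x.length, e.1 = (i, j).2 ∧ (i', j').1 = (i, j).1 + 1 ∧
            (i', j').2 = e.2.2.2 ∧
            t = (c (some (x.get ⟨(i, j).1, hi⟩), some e.2.1) : ℝ≥0∞) + (e.2.2.1 : ℝ≥0∞)}) with hS
      have hW : wfaEdgeWeight A c x (i, j) (i', j') = sInf S := rfl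
      have hSne : S.Nonempty := by
        by_contra h
        rw [Set.not_nonempty_iff_eq_empty] at h
        rw [hW, h, sInf_empty] at htop
        exact htop rfl
      have hSfin : S.Finite := by
        apply Set.Finite.union
        apply Set.Finite.union
        · exact Set.Finite.subset (Set.finite_singleton
            (if hi : i < x.length then (c (some (x.get ⟨i, hi⟩), none) : ℝ≥0∞) else 0))
            (by rintro t ⟨hi, _, _, rfl⟩; simp [hi])
        · exact Set.Finite.subset (hE.image fun e => (c (none, some e.2.1) : ℝ≥0∞) + (e.2.2.1 : ℝ≥0∞))
            (by rintro t ⟨e, he, _, _, _, rfl⟩; exact ⟨e, he, rfl⟩)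
        · exact Set.Finite.subset (hE.image fun e =>
              (if hi : i < x.length then (c (some (x.get ⟨i, hi⟩), some e.2.1) : ℝ≥0∞) else 0) + (e.2.2.1 : ℝ≥0∞))
            (by rintro t ⟨e, he, hi, _, _, _, rfl⟩; exact ⟨e, he, by simp [hi]⟩)
      have hmem : sInf S ∈ S := hSne.csInf_mem hSfin
      rw [hS] at hmem
      have hlast' : ∀ z : σ, ∀ k : ℕ,
          (((k, z) :: vs').getLast (List.cons_ne_nil _ _)) =
            (((i, j) :: (k, z) :: vs').getLast (List.cons_ne_nil _ _)) :=
        fun z k => (List.getLast_cons (List.cons_ne_nil _ _)).symm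
      rcases hmem with (⟨hi, h1, h2, ht⟩ | ⟨e, he, he1, h1, h2, ht⟩) | ⟨e, he, hi, he1, h1, h2, ht⟩
      · -- deletion edge
        have h1' : i' = i + 1 := h1
        subst h1'
        have h2' : j = j' := h2.symm
        subst h2'
        rcases ih (i + 1) j (by rw [hlast' j (i+1)]; exact hlast) with h | ⟨y, ω, es, q, hal, hp, hl, hq, hle⟩
        · left; rw [h, add_top]
        · right
          refine ⟨y, (some x[i], none) :: ω, es, q, ⟨?_, ?_, ?_⟩, hp, hl, ?_, ?_⟩
          · intro p hp
            rcases List.mem_cons.1 hp with rfl | hp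
            · simp
            · exact hal.1 p hp
          · rw [List.filterMap_cons]
            simp only [Option.some.injEq]
            rw [hal.2.1, ← List.drop_eq_getElem_cons hi]
          · rw [List.filterMap_cons]; exact hal.2.2
          · rw [← hlast' j (i+1)]; exact hq
          · rw [hW, ht, alignCost_cons]
            push_cast
            calc (c (some x[i], none) : ℝ≥0∞) + (alignCost c ω : ℝ≥0∞) + pathWeight es
                = (c (some x[i], none) : ℝ≥0∞) + ((alignCost c ω : ℝ≥0∞) + pathWeight es) := by
                  rw [add_assoc]
              _ ≤ (c (some (x.get ⟨(i, j).1, hi⟩), none) : ℝ≥0∞) +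
                    walkWeight (wfaEdgeWeight A c x) (i+1, j) vs' := by
                  apply add_le_add _ hle
                  simp [List.get_eq_getElem]
      · -- insertion edge
        have h1' : i = i' := h1.symm
        subst h1'
        have h2' : j' = e.2.2.2 := h2
        subst h2'
        rcases ih i e.2.2.2 (by rw [hlast' e.2.2.2 i]; exact hlast) with h | ⟨y, ω, es, q, hal, hp, hl, hq, hle⟩
        · left; rw [h, add_top]
        · right
          refine ⟨e.2.1 :: y, (none, some e.2.1) :: ω, e :: es, q, ⟨?_, ?_, ?_⟩, ⟨he, he1, hp⟩, ?_, ?_, ?_⟩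
          · intro p hp
            rcases List.mem_cons.1 hp with rfl | hp
            · simp
            · exact hal.1 p hp
          · rw [List.filterMap_cons]; exact hal.2.1
          · rw [List.filterMap_cons]
            simp only [Option.some.injEq]
            rw [hal.2.2]
          · exact congrArg (List.cons e.2.1) hl
          · rw [← hlast' e.2.2.2 i]; exact hq
          · rw [hW, ht, alignCost_cons, pathWeight_cons]
            push_cast
            calc (c (none, some e.2.1) : ℝ≥0∞) + (alignCost c ω : ℝ≥0∞) +
                  ((e.2.2.1 : ℝ≥0∞) + pathWeight es)
                = ((c (none, some e.2.1) : ℝ≥0∞) + (e.2.2.1 : ℝ≥0∞)) +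
                    ((alignCost c ω : ℝ≥0∞) + pathWeight es) := by
                  rw [add_add_add_comm]
              _ ≤ _ := add_le_add le_rfl hle
      · -- substitution edge
        have h1' : i' = i + 1 := h1
        have h2' : j' = e.2.2.2 := h2
        subst h1'; subst h2'
        rcases ih (i+1) e.2.2.2 (by rw [hlast' e.2.2.2 (i+1)]; exact hlast) with h | ⟨y, ω, es, q, hal, hp, hl, hq, hle⟩
        · left; rw [h, add_top]
        · right
          refine ⟨e.2.1 :: y, (some x[i], some e.2.1) :: ω, e :: es, q, ⟨?_, ?_, ?_⟩, ⟨he, he1, hp⟩, ?_, ?_, ?_⟩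
          · intro p hp
            rcases List.mem_cons.1 hp with rfl | hp
            · simp
            · exact hal.1 p hp
          · rw [List.filterMap_cons]
            simp only [Option.some.injEq]
            rw [hal.2.1, ← List.drop_eq_getElem_cons hi]
          · rw [List.filterMap_cons]
            simp only [Option.some.injEq]
            rw [hal.2.2]
          · exact congrArg (List.cons e.2.1) hl
          · rw [← hlast' e.2.2.2 (i+1)]; exact hq
          · rw [hW, ht, alignCost_cons, pathWeight_cons]
            push_cast
            calc (c (some x[i], some e.2.1) : ℝ≥0∞) + (alignCost c ω : ℝ≥0∞) +
                  ((e.2.2.1 : ℝ≥0∞) + pathWeight es)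
                = ((c (some x[i], some e.2.1) : ℝ≥0∞) + (e.2.2.1 : ℝ≥0∞)) +
                    ((alignCost c ω : ℝ≥0∞) + pathWeight es) := by
                  rw [add_add_add_comm]
              _ ≤ ((c (some (x.get ⟨(i, j).1, hi⟩), some e.2.1) : ℝ≥0∞) + (e.2.2.1 : ℝ≥0∞)) +
                    walkWeight (wfaEdgeWeight A c x) (i+1, e.2.2.2) vs' := by
                  apply add_le_add _ hle
                  simp [List.get_eq_getElem]
end LemB

/-- Lemma 1, weighted tropical form: the infimum over all
directed walks in the product graph `U` from some `(0, j₀)` to some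
`(n, j_f)` of `λ(j₀)` plus the total edge weight plus `ρ(j_f)` equals
`d(x, A) = inf_{y ∈ Σ*} (A(y) + d(x, y))` (both sides in `[0, ∞]`). -/
theorem wfa_product_shortest_eq_editDist {α σ : Type*} [Fintype α] [Fintype σ]
    (A : WFA α σ) (hE : A.trans.Finite) (c : EditOp α → ℝ≥0) (x : List α) :
    (⨅ (j₀ : σ) (vs : List (ℕ × σ))
        (_ : (((0, j₀) :: vs).getLast (List.cons_ne_nil _ _)).1 = x.length),
        A.initW j₀ + walkWeight (wfaEdgeWeight A c x) (0, j₀) vs +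
          A.finalW ((((0, j₀) :: vs).getLast (List.cons_ne_nil _ _)).2))
    = ⨅ y : List α, (A.val y + (editDist c x y : ℝ≥0∞)) := by
  classical
  apply le_antisymm
  · refine le_iInf fun y => ?_
    have h1 : A.val y + (editDist c x y : ℝ≥0∞) =
        ⨅ (ω : List (EditOp α)) (_ : IsAlignment ω x y)
          (p : σ) (q : σ) (es : List (σ × α × ℝ≥0 × σ))
          (_ : IsPath A.trans p es q ∧ pathLabel es = y),
          (A.initW p + pathWeight es + A.finalW q + (alignCost c ω : ℝ≥0∞)) := by
      rw [WFA.val, editDist_coe]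
      simp only [ENNReal.iInf_add, ENNReal.add_iInf]
    rw [h1]
    refine le_iInf fun ω => le_iInf fun hω => le_iInf fun p => le_iInf fun q =>
      le_iInf fun es => le_iInf fun hpe => ?_
    obtain ⟨vs, hn, hq, hw⟩ := walk_of_align A c x ω 0 p es q hω.1
      (by simpa using hω.2.1.symm) (Nat.zero_le _) hpe.1 (hpe.2.trans hω.2.2.symm)
    refine iInf_le_of_le p (iInf_le_of_le vs (iInf_le_of_le hn ?_))
    rw [hq]
    calc A.initW p + walkWeight (wfaEdgeWeight A c x) (0, p) vs + A.finalW q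
        ≤ A.initW p + ((alignCost c ω : ℝ≥0∞) + pathWeight es) + A.finalW q :=
          add_le_add (add_le_add le_rfl hw) le_rfl
      _ = A.initW p + pathWeight es + A.finalW q + (alignCost c ω : ℝ≥0∞) := by ring
  · refine le_iInf fun j₀ => le_iInf fun vs => le_iInf fun hlast => ?_
    rcases align_of_walk A hE c x vs 0 j₀ hlast with h | ⟨y, ω, es, q, hal, hp, hl, hq, hle⟩
    · rw [h]
      simp
    · have hal' : IsAlignment ω x y := by simpa using hal
      calc (⨅ y : List α, (A.val y + (editDist c x y : ℝ≥0∞)))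
          ≤ A.val y + (editDist c x y : ℝ≥0∞) := iInf_le _ y
        _ ≤ (A.initW j₀ + pathWeight es + A.finalW q) + (alignCost c ω : ℝ≥0∞) := by
            refine add_le_add ?_ (ENNReal.coe_le_coe.2 (editDist_le c hal'))
            exact iInf_le_of_le j₀ (iInf_le_of_le q (iInf_le_of_le es
              (iInf_le_of_le ⟨hp, hl⟩ le_rfl)))
        _ = A.initW j₀ + ((alignCost c ω : ℝ≥0∞) + pathWeight es) + A.finalW q := by ring
        _ ≤ A.initW j₀ + walkWeight (wfaEdgeWeight A c x) (0, j₀) vs + A.finalW q :=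
            add_le_add (add_le_add le_rfl hle) le_rfl
        _ = A.initW j₀ + walkWeight (wfaEdgeWeight A c x) (0, j₀) vs +
              A.finalW ((((0, j₀) :: vs).getLast (List.cons_ne_nil _ _)).2) := by rw [hq]
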